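/- arXiv:1206.3161 — 3 statements merged into one kernel-verified Lean document; each statement's English description precedes it below -/
import Mathlib

section
/- Let n ≥ 1 and let μ be the uniform (rotation-invariant) probability measure on the unit sphere in EuclideanSpace ℝ (Fin (4n)). For x on the sphere let q_i(x) ∈ ℍ be the quaternion whose four components are the coordinates of x in block i (coordinates 4i, 4i+1, 4i+2, 4i+3). Then the expected squared failure-to-close of a random spatial arm of length 2 satisfies ∫ ‖∑_{i=0}^{n-1} 2·Hopf(q_i(x))‖² dμ(x) = 12/(2n+1), that is, E(ℓ², Arm₃(n)) = n · E(|e_j|², Arm₃(n)) = 6/(n + 1/2). -/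
open scoped Quaternion
open MeasureTheory Real

/-- The quaternion unit 𝐢. -/
noncomputable def qI : ℍ[ℝ] := ⟨0, 1, 0, 0⟩

/-- The Hopf map `q ↦ q̄ · 𝐢 · q`. -/
noncomputable def Hopf (q : ℍ[ℝ]) : ℍ[ℝ] := star q * qI * q

/-- The quaternion formed from the `i`-th block of four coordinates of `x ∈ ℝ^{4n}`. -/
noncomputable def blockQuat (n : ℕ) (i : Fin n) (x : EuclideanSpace ℝ (Fin (4 * n))) : ℍ[ℝ] :=
  ⟨x ⟨4 * i, by have := i.isLt; omega⟩, x ⟨4 * i + 1, by have := i.isLt; omega⟩,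
   x ⟨4 * i + 2, by have := i.isLt; omega⟩, x ⟨4 * i + 3, by have := i.isLt; omega⟩⟩

/-! ### Auxiliary isometries of Euclidean space -/

section Isometries

variable {N : ℕ}

/-- The signed-permutation linear map `x ↦ fun k => ε k * x (σ k)`. -/
noncomputable def signedPermL (σ : Equiv.Perm (Fin N)) (ε : Fin N → ℝ) :
    EuclideanSpace ℝ (Fin N) →ₗ[ℝ] EuclideanSpace ℝ (Fin N) where
  toFun x := WithLp.toLp 2 fun k => ε k * x (σ k)
  map_add' x y := by ext k; simp [mul_add]
  map_smul' c x := by ext k; simp [smul_eq_mul]; ring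

@[simp] lemma signedPermL_apply (σ : Equiv.Perm (Fin N)) (ε : Fin N → ℝ)
    (x : EuclideanSpace ℝ (Fin N)) (k : Fin N) : signedPermL σ ε x k = ε k * x (σ k) := rfl

/-- The signed-permutation linear equivalence. -/
noncomputable def signedPermE (σ : Equiv.Perm (Fin N)) (ε : Fin N → ℝ)
    (hε : ∀ k, ε k = 1 ∨ ε k = -1) :
    EuclideanSpace ℝ (Fin N) ≃ₗ[ℝ] EuclideanSpace ℝ (Fin N) :=
  LinearEquiv.ofLinear (signedPermL σ ε)
    (signedPermL σ.symm fun k => ε (σ.symm k))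
    (by
      ext y k
      simp only [LinearMap.comp_apply, signedPermL_apply, LinearMap.id_apply,
        Equiv.apply_symm_apply, Equiv.symm_apply_apply]
      rcases hε k with h | h <;> rw [h] <;> ring)
    (by
      ext x k
      simp only [LinearMap.comp_apply, signedPermL_apply, LinearMap.id_apply,
        Equiv.symm_apply_apply, Equiv.apply_symm_apply]
      rcases hε (σ.symm k) with h | h <;> rw [h] <;> ring)

@[simp] lemma signedPermE_apply (σ : Equiv.Perm (Fin N)) (ε : Fin N → ℝ)
    (hε : ∀ k, ε k = 1 ∨ ε k = -1) (x : EuclideanSpace ℝ (Fin N)) (k : Fin N) :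
    signedPermE σ ε hε x k = ε k * x (σ k) := rfl

/-- The signed-permutation isometry. -/
noncomputable def signedPerm (σ : Equiv.Perm (Fin N)) (ε : Fin N → ℝ)
    (hε : ∀ k, ε k = 1 ∨ ε k = -1) :
    EuclideanSpace ℝ (Fin N) ≃ₗᵢ[ℝ] EuclideanSpace ℝ (Fin N) where
  toLinearEquiv := signedPermE σ ε hε
  norm_map' x := by
    rw [EuclideanSpace.norm_eq, EuclideanSpace.norm_eq]
    congr 1
    have step : ∀ k : Fin N, ‖signedPermE σ ε hε x k‖ ^ 2 = ‖x (σ k)‖ ^ 2 := by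
      intro k
      rw [signedPermE_apply, norm_mul, mul_pow]
      rcases hε k with h | h <;> rw [h] <;> norm_num
    rw [Finset.sum_congr rfl fun k _ => step k]
    exact Equiv.sum_comp σ fun k => ‖x k‖ ^ 2

@[simp] lemma signedPerm_apply (σ : Equiv.Perm (Fin N)) (ε : Fin N → ℝ)
    (hε : ∀ k, ε k = 1 ∨ ε k = -1) (x : EuclideanSpace ℝ (Fin N)) (k : Fin N) :
    signedPerm σ ε hε x k = ε k * x (σ k) := rfl

/-- 45-degree rotation in the `(k,l)` coordinate plane. -/
noncomputable def rotL (k l : Fin N) :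
    EuclideanSpace ℝ (Fin N) →ₗ[ℝ] EuclideanSpace ℝ (Fin N) where
  toFun x := WithLp.toLp 2 fun m =>
    if m = k then (x k + x l) / Real.sqrt 2
    else if m = l then (x k - x l) / Real.sqrt 2 else x m
  map_add' x y := by
    ext m
    simp only [PiLp.add_apply]
    by_cases h1 : m = k
    · simp only [if_pos h1]; ring
    · by_cases h2 : m = l
      · simp only [if_neg h1, if_pos h2]; ring
      · simp only [if_neg h1, if_neg h2]
  map_smul' c x := by
    ext m
    simp only [PiLp.smul_apply, smul_eq_mul, RingHom.id_apply]
    by_cases h1 : m = k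
    · simp only [if_pos h1]; ring
    · by_cases h2 : m = l
      · simp only [if_neg h1, if_pos h2]; ring
      · simp only [if_neg h1, if_neg h2]

@[simp] lemma rotL_apply (k l : Fin N) (x : EuclideanSpace ℝ (Fin N)) (m : Fin N) :
    rotL k l x m = if m = k then (x k + x l) / Real.sqrt 2
      else if m = l then (x k - x l) / Real.sqrt 2 else x m := rfl

lemma sqrt_two_sq : (Real.sqrt 2) ^ 2 = 2 := Real.sq_sqrt (by norm_num)

lemma sqrt_two_ne : (Real.sqrt 2) ≠ 0 := by positivity

lemma rotL_invol (k l : Fin N) (hkl : k ≠ l) (x : EuclideanSpace ℝ (Fin N)) :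
    rotL k l (rotL k l x) = x := by
  ext m
  have hk : rotL k l x k = (x k + x l) / Real.sqrt 2 := by simp
  have hl : rotL k l x l = (x k - x l) / Real.sqrt 2 := by
    simp [hkl.symm, if_neg]
  by_cases h1 : m = k
  · subst h1
    rw [rotL_apply, if_pos rfl, hk, hl]
    have := sqrt_two_sq
    field_simp
    rw [this]; ring
  · by_cases h2 : m = l
    · subst h2
      rw [rotL_apply, if_neg h1, if_pos rfl, hk, hl]
      have := sqrt_two_sq
      field_simp
      rw [this]; ring
    · rw [rotL_apply, if_neg h1, if_neg h2, rotL_apply, if_neg h1, if_neg h2]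

/-- The 45-degree rotation isometry in the `(k,l)` plane. -/
noncomputable def rotIso (k l : Fin N) (hkl : k ≠ l) :
    EuclideanSpace ℝ (Fin N) ≃ₗᵢ[ℝ] EuclideanSpace ℝ (Fin N) where
  toLinearEquiv := LinearEquiv.ofLinear (rotL k l) (rotL k l)
    (by ext y m; rw [LinearMap.comp_apply, LinearMap.id_apply, rotL_invol k l hkl y])
    (by ext y m; rw [LinearMap.comp_apply, LinearMap.id_apply, rotL_invol k l hkl y])
  norm_map' x := by
    rw [EuclideanSpace.norm_eq, EuclideanSpace.norm_eq]
    congr 1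
    have key : ∀ y : EuclideanSpace ℝ (Fin N), ∀ m, ‖y m‖ ^ 2 = (y m) ^ 2 := by
      intro y m; rw [Real.norm_eq_abs, sq_abs]
    simp_rw [key]
    show (∑ m : Fin N, (rotL k l x m)^2) = _
    have hmemk : k ∈ Finset.univ := Finset.mem_univ k
    have hmeml : l ∈ Finset.univ.erase k := Finset.mem_erase.2 ⟨Ne.symm hkl, Finset.mem_univ l⟩
    rw [← Finset.add_sum_erase _ _ hmemk, ← Finset.add_sum_erase _ _ hmeml,
        ← Finset.add_sum_erase _ (fun m => (x m)^2) hmemk,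
        ← Finset.add_sum_erase _ (fun m => (x m)^2) hmeml]
    have hk : rotL k l x k = (x k + x l) / Real.sqrt 2 := by simp
    have hl : rotL k l x l = (x k - x l) / Real.sqrt 2 := by simp [hkl.symm, if_neg]
    rw [hk, hl]
    have hrest : ∑ m ∈ (Finset.univ.erase k).erase l, (rotL k l x m) ^ 2
        = ∑ m ∈ (Finset.univ.erase k).erase l, (x m) ^ 2 := by
      refine Finset.sum_congr rfl fun m hm => ?_
      rw [Finset.mem_erase] at hm
      have hm2 := Finset.mem_erase.1 hm.2
      rw [rotL_apply, if_neg hm2.1, if_neg hm.1]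
    rw [hrest]
    have h2 := sqrt_two_sq
    have := sqrt_two_ne
    field_simp
    rw [h2]
    ring

@[simp] lemma rotIso_apply (k l : Fin N) (hkl : k ≠ l) (x : EuclideanSpace ℝ (Fin N)) (m : Fin N) :
    rotIso k l hkl x m = if m = k then (x k + x l) / Real.sqrt 2
      else if m = l then (x k - x l) / Real.sqrt 2 else x m := rfl

end Isometries

/-! ### Measure-theoretic helpers -/

section MeasureHelpers

variable {N : ℕ} {μ : Measure (EuclideanSpace ℝ (Fin N))} [IsProbabilityMeasure μ]

lemma ae_norm_one (hsphere : μ (Metric.sphere (0 : EuclideanSpace ℝ (Fin N)) 1) = 1) :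
    ∀ᵐ x ∂μ, ‖x‖ = 1 := by
  have hmeas : MeasurableSet (Metric.sphere (0 : EuclideanSpace ℝ (Fin N)) 1) :=
    Metric.isClosed_sphere.measurableSet
  have hz : μ (Metric.sphere (0 : EuclideanSpace ℝ (Fin N)) 1)ᶜ = 0 := by
    rw [prob_compl_eq_zero_iff hmeas]; exact hsphere
  refine measure_mono_null ?_ hz
  intro x hx
  simp only [Set.mem_compl_iff, Metric.mem_sphere, dist_zero_right] at *
  exact fun h => hx h

lemma integrable_of_bound (hsphere : μ (Metric.sphere (0 : EuclideanSpace ℝ (Fin N)) 1) = 1)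
    (f : EuclideanSpace ℝ (Fin N) → ℝ) (hf : Continuous f) (C : ℝ)
    (hC : ∀ x : EuclideanSpace ℝ (Fin N), ‖x‖ = 1 → |f x| ≤ C) : Integrable f μ :=
  (integrable_const C).mono' hf.aestronglyMeasurable
    ((ae_norm_one hsphere).mono fun x hx => by rw [Real.norm_eq_abs]; exact hC x hx)

omit [IsProbabilityMeasure μ] in
lemma integral_comp_iso
    (hinv : ∀ O : EuclideanSpace ℝ (Fin N) ≃ₗᵢ[ℝ] EuclideanSpace ℝ (Fin N),
      Measure.map (fun x => O x) μ = μ)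
    (O : EuclideanSpace ℝ (Fin N) ≃ₗᵢ[ℝ] EuclideanSpace ℝ (Fin N))
    (f : EuclideanSpace ℝ (Fin N) → ℝ) (hf : Continuous f) :
    ∫ x, f (O x) ∂μ = ∫ x, f x ∂μ := by
  conv_rhs => rw [← hinv O]
  rw [integral_map (O.continuous.measurable.aemeasurable)
    (by rw [hinv O]; exact hf.aestronglyMeasurable)]

lemma hcoord (k : Fin N) : Continuous fun x : EuclideanSpace ℝ (Fin N) => x k :=
  (EuclideanSpace.proj (𝕜 := ℝ) k).continuous

lemma sum_sq_of_norm_one (x : EuclideanSpace ℝ (Fin N)) (hx : ‖x‖ = 1) :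
    ∑ k, (x k)^2 = 1 := by
  have h := EuclideanSpace.norm_eq x
  rw [hx] at h
  have hnn : (0:ℝ) ≤ ∑ k, ‖x k‖^2 := Finset.sum_nonneg fun k _ => sq_nonneg _
  have h1 : ∑ k, ‖x k‖^2 = 1 := by
    nlinarith [Real.sq_sqrt hnn]
  rw [← h1]
  exact Finset.sum_congr rfl fun k _ => by rw [Real.norm_eq_abs, sq_abs]

lemma coord_sq_le (x : EuclideanSpace ℝ (Fin N)) (hx : ‖x‖ = 1) (k : Fin N) :
    (x k)^2 ≤ 1 := by
  have h := sum_sq_of_norm_one x hx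
  calc (x k)^2 ≤ ∑ i, (x i)^2 :=
        Finset.single_le_sum (fun i _ => sq_nonneg (x i)) (Finset.mem_univ k)
    _ = 1 := h

lemma coord_abs_le (x : EuclideanSpace ℝ (Fin N)) (hx : ‖x‖ = 1) (k : Fin N) :
    |x k| ≤ 1 := by
  have h := coord_sq_le x hx k
  nlinarith [abs_nonneg (x k), sq_abs (x k)]

lemma abs_monomial_le {a b : ℝ} (ha : |a| ≤ 1) (hb : |b| ≤ 1) (p q : ℕ) :
    |a^p * b^q| ≤ 1 := by
  rw [abs_mul, abs_pow, abs_pow]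
  have h1 : |a|^p ≤ 1 := pow_le_one₀ (abs_nonneg a) ha
  have h2 : |b|^q ≤ 1 := pow_le_one₀ (abs_nonneg b) hb
  nlinarith [pow_nonneg (abs_nonneg a) p, pow_nonneg (abs_nonneg b) q]

lemma integrable_monomial (hsphere : μ (Metric.sphere (0 : EuclideanSpace ℝ (Fin N)) 1) = 1)
    (k l : Fin N) (p q : ℕ) :
    Integrable (fun x : EuclideanSpace ℝ (Fin N) => (x k)^p * (x l)^q) μ :=
  integrable_of_bound hsphere _ (((hcoord k).pow p).mul ((hcoord l).pow q)) 1
    (fun x hx => abs_monomial_le (coord_abs_le x hx k) (coord_abs_le x hx l) p q)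

omit [IsProbabilityMeasure μ] in
lemma odd_vanish
    (hinv : ∀ O : EuclideanSpace ℝ (Fin N) ≃ₗᵢ[ℝ] EuclideanSpace ℝ (Fin N),
      Measure.map (fun x => O x) μ = μ)
    (k l : Fin N) (hkl : k ≠ l) :
    ∫ x, (x k)^3 * x l ∂μ = 0 := by
  set ε : Fin N → ℝ := fun m => if m = l then -1 else 1 with hεdef
  have hok : ∀ m, ε m = 1 ∨ ε m = -1 := fun m => by
    by_cases h : m = l <;> simp [hεdef, h]
  set O := signedPerm (1 : Equiv.Perm (Fin N)) ε hok with hO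
  have hcont : Continuous fun x : EuclideanSpace ℝ (Fin N) => (x k)^3 * x l :=
    ((hcoord k).pow 3).mul (hcoord l)
  have h := integral_comp_iso hinv O (fun y => (y k)^3 * y l) hcont
  have hfo : ∀ x : EuclideanSpace ℝ (Fin N),
      (fun y : EuclideanSpace ℝ (Fin N) => (y k)^3 * y l) (O x) = -((x k)^3 * x l) := by
    intro x
    have h1 : O x k = x k := by
      rw [hO, signedPerm_apply]
      simp [hεdef, hkl]
    have h2 : O x l = -x l := by
      rw [hO, signedPerm_apply]
      simp [hεdef]
    show (O x k)^3 * (O x l) = _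
    rw [h1, h2]
    ring
  rw [integral_congr_ae (Filter.Eventually.of_forall hfo)] at h
  rw [integral_neg] at h
  linarith

lemma rot_eq
    (hsphere : μ (Metric.sphere (0 : EuclideanSpace ℝ (Fin N)) 1) = 1)
    (hinv : ∀ O : EuclideanSpace ℝ (Fin N) ≃ₗᵢ[ℝ] EuclideanSpace ℝ (Fin N),
      Measure.map (fun x => O x) μ = μ)
    (k l : Fin N) (hkl : k ≠ l) :
    ∫ x, (x k)^4 ∂μ
      = (∫ x, (x k)^4 ∂μ + 6 * ∫ x, (x k)^2 * (x l)^2 ∂μ + ∫ x, (x l)^4 ∂μ) / 4 := by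
  have h4 : Real.sqrt 2 ^ 4 = 4 := by
    have h2 : Real.sqrt 2 ^ 2 = 2 := Real.sq_sqrt (by norm_num)
    nlinarith [h2]
  set O := rotIso k l hkl with hO
  have hcont : Continuous fun x : EuclideanSpace ℝ (Fin N) => (x k)^4 :=
    (hcoord k).pow 4
  have h := integral_comp_iso hinv O (fun y => (y k)^4) hcont
  have hOk : ∀ x : EuclideanSpace ℝ (Fin N), O x k = (x k + x l)/Real.sqrt 2 := by
    intro x; rw [hO, rotIso_apply]; simp
  have hfo : ∀ x : EuclideanSpace ℝ (Fin N),
      (fun y : EuclideanSpace ℝ (Fin N) => (y k)^4) (O x)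
        = ((x k)^4 + 4*((x k)^3 * x l) + 6*((x k)^2*(x l)^2) + 4*(x k * (x l)^3) + (x l)^4)/4 := by
    intro x
    show (O x k)^4 = _
    rw [hOk x, div_pow, h4]
    ring
  rw [integral_congr_ae (Filter.Eventually.of_forall hfo)] at h
  have i1 : Integrable (fun x : EuclideanSpace ℝ (Fin N) => (x k)^4) μ := by
    have := integrable_monomial hsphere k l 4 0
    refine this.congr (Filter.Eventually.of_forall fun x => by simp)
  have i2 : Integrable (fun x : EuclideanSpace ℝ (Fin N) => 4*((x k)^3 * x l)) μ := by
    have := integrable_monomial hsphere k l 3 1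
    have h' := this.const_mul (4:ℝ)
    refine h'.congr (Filter.Eventually.of_forall fun x => by simp [pow_one])
  have i3 : Integrable (fun x : EuclideanSpace ℝ (Fin N) => 6*((x k)^2 * (x l)^2)) μ :=
    (integrable_monomial hsphere k l 2 2).const_mul (6:ℝ)
  have i4 : Integrable (fun x : EuclideanSpace ℝ (Fin N) => 4*(x k * (x l)^3)) μ := by
    have := integrable_monomial hsphere k l 1 3
    have h' := this.const_mul (4:ℝ)
    refine h'.congr (Filter.Eventually.of_forall fun x => by simp [pow_one])
  have i5 : Integrable (fun x : EuclideanSpace ℝ (Fin N) => (x l)^4) μ := by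
    have := integrable_monomial hsphere k l 0 4
    refine this.congr (Filter.Eventually.of_forall fun x => by simp)
  have hsplit : ∫ x, ((x k)^4 + 4*((x k)^3 * x l) + 6*((x k)^2*(x l)^2) + 4*(x k * (x l)^3) + (x l)^4) ∂μ
      = ∫ x, (x k)^4 ∂μ + 4*(∫ x, (x k)^3 * x l ∂μ) + 6*(∫ x, (x k)^2*(x l)^2 ∂μ)
        + 4*(∫ x, x k * (x l)^3 ∂μ) + ∫ x, (x l)^4 ∂μ := by
    have e12 : ∫ x, ((x k)^4 + 4*((x k)^3 * x l)) ∂μ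
        = (∫ x, (x k)^4 ∂μ) + ∫ x, 4*((x k)^3 * x l) ∂μ := integral_add i1 i2
    have e123 : ∫ x, ((x k)^4 + 4*((x k)^3 * x l) + 6*((x k)^2*(x l)^2)) ∂μ
        = (∫ x, ((x k)^4 + 4*((x k)^3 * x l)) ∂μ) + ∫ x, 6*((x k)^2*(x l)^2) ∂μ :=
      integral_add (i1.add i2) i3
    have e1234 : ∫ x, ((x k)^4 + 4*((x k)^3 * x l) + 6*((x k)^2*(x l)^2) + 4*(x k * (x l)^3)) ∂μ
        = (∫ x, ((x k)^4 + 4*((x k)^3 * x l) + 6*((x k)^2*(x l)^2)) ∂μ)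
          + ∫ x, 4*(x k * (x l)^3) ∂μ := integral_add ((i1.add i2).add i3) i4
    have e12345 : ∫ x, ((x k)^4 + 4*((x k)^3 * x l) + 6*((x k)^2*(x l)^2) + 4*(x k * (x l)^3) + (x l)^4) ∂μ
        = (∫ x, ((x k)^4 + 4*((x k)^3 * x l) + 6*((x k)^2*(x l)^2) + 4*(x k * (x l)^3)) ∂μ)
          + ∫ x, (x l)^4 ∂μ := integral_add (((i1.add i2).add i3).add i4) i5
    have c2 : ∫ x, 4*((x k)^3 * x l) ∂μ = 4 * ∫ x, (x k)^3 * x l ∂μ := integral_const_mul _ _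
    have c3 : ∫ x, 6*((x k)^2 * (x l)^2) ∂μ = 6 * ∫ x, (x k)^2 * (x l)^2 ∂μ := integral_const_mul _ _
    have c4 : ∫ x, 4*(x k * (x l)^3) ∂μ = 4 * ∫ x, x k * (x l)^3 ∂μ := integral_const_mul _ _
    rw [e12345, e1234, e123, e12, c2, c3, c4]
  rw [integral_div, hsplit] at h
  have ho1 : ∫ x, (x k)^3 * x l ∂μ = 0 := odd_vanish hinv k l hkl
  have ho2 : ∫ x, x k * (x l)^3 ∂μ = 0 := by
    have h' := odd_vanish hinv l k hkl.symm
    rw [← h']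
    exact integral_congr_ae (Filter.Eventually.of_forall fun x => by ring)
  rw [ho1, ho2] at h
  linarith

end MeasureHelpers

/-! ### Quaternion helpers -/

noncomputable def jQ : ℍ[ℝ] := ⟨0, 0, 1, 0⟩
noncomputable def kQ : ℍ[ℝ] := ⟨0, 0, 0, 1⟩

lemma norm_qI : ‖qI‖ = 1 := by
  have h : Quaternion.normSq qI = 1 := by
    rw [Quaternion.normSq_def']
    show (0:ℝ)^2 + 1^2 + 0^2 + 0^2 = 1
    norm_num
  have h2 := Quaternion.normSq_eq_norm_mul_self qI
  nlinarith [norm_nonneg qI]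

lemma norm_Hopf (q : ℍ[ℝ]) : ‖Hopf q‖ = ‖q‖^2 := by
  rw [Hopf, norm_mul, norm_mul, Quaternion.norm_star, norm_qI]
  ring

lemma inner_Hopf_self (q : ℍ[ℝ]) :
    (inner ℝ (Hopf q) (Hopf q) : ℝ) = Quaternion.normSq q ^ 2 := by
  rw [real_inner_self_eq_norm_sq, norm_Hopf, Quaternion.normSq_eq_norm_mul_self]
  ring

lemma star_jQ_qI_jQ : star jQ * qI * jQ = -qI := by
  ext <;> simp <;> simp [jQ, qI]

lemma Hopf_jQ_mul (q : ℍ[ℝ]) : Hopf (jQ * q) = -Hopf q := by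
  rw [Hopf, Hopf, star_mul]
  have h1 : star q * star jQ * qI * (jQ * q) = star q * (star jQ * qI * jQ) * q := by
    noncomm_ring
  rw [h1, star_jQ_qI_jQ]
  noncomm_ring

lemma continuous_quat_comb {α : Type*} [TopologicalSpace α] {a b c d : α → ℝ}
    (ha : Continuous a) (hb : Continuous b) (hc : Continuous c) (hd : Continuous d) :
    Continuous fun s => ((a s : ℍ[ℝ]) + (b s) • qI + (c s) • jQ + (d s) • kQ) :=
  (((Quaternion.continuous_coe.comp ha).add (hb.smul continuous_const)).add
    (hc.smul continuous_const)).add (hd.smul continuous_const)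

lemma quat_eq_comb (q : ℍ[ℝ]) :
    q = (q.re : ℍ[ℝ]) + q.imI • qI + q.imJ • jQ + q.imK • kQ := by
  ext <;> simp <;> simp [qI, jQ, kQ]

lemma continuous_star_quat : Continuous (star : ℍ[ℝ] → ℍ[ℝ]) := by
  have key : (star : ℍ[ℝ] → ℍ[ℝ])
      = fun q => ((q.re : ℍ[ℝ]) + (-q.imI) • qI + (-q.imJ) • jQ + (-q.imK) • kQ) := by
    funext q
    conv_lhs => rw [show q = (q.re : ℍ[ℝ]) + q.imI • qI + q.imJ • jQ + q.imK • kQ from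
      quat_eq_comb q]
    simp [star_add, star_smul]
    ext <;> simp <;> simp [qI, jQ, kQ]
  rw [key]
  exact continuous_quat_comb Quaternion.continuous_re Quaternion.continuous_imI.neg
    Quaternion.continuous_imJ.neg Quaternion.continuous_imK.neg

lemma continuous_Hopf : Continuous Hopf := by
  unfold Hopf
  exact (continuous_star_quat.mul continuous_const).mul continuous_id

/-- Constructor for quaternions with pinned type. -/
noncomputable def mkQ (a b c d : ℝ) : ℍ[ℝ] := ⟨a, b, c, d⟩

@[simp] lemma mkQ_re (a b c d : ℝ) : (mkQ a b c d).re = a := rfl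
@[simp] lemma mkQ_imI (a b c d : ℝ) : (mkQ a b c d).imI = b := rfl
@[simp] lemma mkQ_imJ (a b c d : ℝ) : (mkQ a b c d).imJ = c := rfl
@[simp] lemma mkQ_imK (a b c d : ℝ) : (mkQ a b c d).imK = d := rfl

lemma jQ_mul_mk (a b c d : ℝ) : jQ * mkQ a b c d = mkQ (-c) d a (-b) := by
  ext <;> simp <;> simp [jQ, mkQ]

/-! ### Block indices -/

def blockIdx (n : ℕ) (i : Fin n) (t : Fin 4) : Fin (4 * n) :=
  ⟨4 * i + t, by have := i.isLt; have := t.isLt; omega⟩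

lemma blockIdx_inj {n : ℕ} {i i' : Fin n} {t t' : Fin 4}
    (h : blockIdx n i t = blockIdx n i' t') : i = i' ∧ t = t' := by
  have hv : 4 * (i:ℕ) + (t:ℕ) = 4 * (i':ℕ) + (t':ℕ) := congrArg Fin.val h
  have ht := t.isLt
  have ht' := t'.isLt
  exact ⟨Fin.ext (by omega), Fin.ext (by omega)⟩

lemma blockIdx_ne {n : ℕ} {i i' : Fin n} {t t' : Fin 4} (h : i ≠ i' ∨ t ≠ t') :
    blockIdx n i t ≠ blockIdx n i' t' := by
  intro hEq
  rcases blockIdx_inj hEq with ⟨h1, h2⟩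
  tauto

lemma blockQuat_eq (n : ℕ) (i : Fin n) (x : EuclideanSpace ℝ (Fin (4 * n))) :
    blockQuat n i x = mkQ (x (blockIdx n i 0)) (x (blockIdx n i 1))
      (x (blockIdx n i 2)) (x (blockIdx n i 3)) := by
  unfold blockQuat mkQ
  congr 1 <;> exact congrArg x (Fin.ext rfl)

lemma continuous_blockQuat (n : ℕ) (i : Fin n) :
    Continuous fun x : EuclideanSpace ℝ (Fin (4 * n)) => blockQuat n i x := by
  have hrepr : (fun x : EuclideanSpace ℝ (Fin (4 * n)) => blockQuat n i x)
      = fun x => ((x (blockIdx n i 0) : ℍ[ℝ]) + (x (blockIdx n i 1)) • qI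
          + (x (blockIdx n i 2)) • jQ + (x (blockIdx n i 3)) • kQ) := by
    funext x
    rw [blockQuat_eq n i x]
    ext <;> simp <;> simp [qI, jQ, kQ, mkQ]
  rw [hrepr]
  exact continuous_quat_comb (hcoord _) (hcoord _) (hcoord _) (hcoord _)

lemma normSq_blockQuat (n : ℕ) (i : Fin n) (x : EuclideanSpace ℝ (Fin (4 * n))) :
    Quaternion.normSq (blockQuat n i x)
      = (x (blockIdx n i 0))^2 + (x (blockIdx n i 1))^2
        + (x (blockIdx n i 2))^2 + (x (blockIdx n i 3))^2 := by
  rw [blockQuat_eq, Quaternion.normSq_def']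
  simp

/-- The expected squared failure-to-close of a random spatial arm of total length 2:
`E(ℓ², Arm₃(n)) = n·E(|eⱼ|², Arm₃(n)) = 6/(n + 1/2) = 12/(2n+1)`.  Here `μ` is the uniform
(rotation-invariant) probability measure on the unit sphere in `ℝ^{4n}` and the edges of the
arm determined by `√2·x` are `2·Hopf(qᵢ(x))`. -/
theorem expected_squared_failure_to_close (n : ℕ) (hn : 1 ≤ n)
    (μ : Measure (EuclideanSpace ℝ (Fin (4 * n)))) [IsProbabilityMeasure μ]
    (hsphere : μ (Metric.sphere (0 : EuclideanSpace ℝ (Fin (4 * n))) 1) = 1)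
    (hinv : ∀ O : EuclideanSpace ℝ (Fin (4 * n)) ≃ₗᵢ[ℝ] EuclideanSpace ℝ (Fin (4 * n)),
      Measure.map (fun x => O x) μ = μ) :
    ∫ x, ‖∑ i : Fin n, (2 : ℝ) • Hopf (blockQuat n i x)‖ ^ 2 ∂μ
      = 12 / (2 * (n : ℝ) + 1) := by

  classical
  have hNpos : 0 < 4 * n := by omega
  -- continuity facts
  have hcont_H : ∀ i : Fin n,
      Continuous fun x : EuclideanSpace ℝ (Fin (4 * n)) => Hopf (blockQuat n i x) :=
    fun i => continuous_Hopf.comp (continuous_blockQuat n i)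
  have hcont_inner : ∀ i j : Fin n, Continuous fun x : EuclideanSpace ℝ (Fin (4 * n)) =>
      (inner ℝ (Hopf (blockQuat n i x)) (Hopf (blockQuat n j x)) : ℝ) :=
    fun i j => (hcont_H i).inner (hcont_H j)
  -- bound
  have hnormH : ∀ (i : Fin n) (x : EuclideanSpace ℝ (Fin (4 * n))), ‖x‖ = 1 →
      ‖Hopf (blockQuat n i x)‖ ≤ 4 := by
    intro i x hx
    rw [norm_Hopf]
    have h2 : ‖blockQuat n i x‖^2 = Quaternion.normSq (blockQuat n i x) := by
      rw [Quaternion.normSq_eq_norm_mul_self]; ring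
    rw [h2, normSq_blockQuat]
    have h0 := coord_sq_le x hx (blockIdx n i 0)
    have h1 := coord_sq_le x hx (blockIdx n i 1)
    have h2' := coord_sq_le x hx (blockIdx n i 2)
    have h3 := coord_sq_le x hx (blockIdx n i 3)
    linarith
  have hb_inner : ∀ (i j : Fin n) (x : EuclideanSpace ℝ (Fin (4 * n))), ‖x‖ = 1 →
      |(inner ℝ (Hopf (blockQuat n i x)) (Hopf (blockQuat n j x)) : ℝ)| ≤ 16 := by
    intro i j x hx
    have h1 := abs_real_inner_le_norm (Hopf (blockQuat n i x)) (Hopf (blockQuat n j x))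
    have h2 := hnormH i x hx
    have h3 := hnormH j x hx
    have h4 := norm_nonneg (Hopf (blockQuat n i x))
    have h5 := norm_nonneg (Hopf (blockQuat n j x))
    nlinarith
  have hInt : ∀ i j : Fin n, Integrable (fun x : EuclideanSpace ℝ (Fin (4 * n)) =>
      (inner ℝ (Hopf (blockQuat n i x)) (Hopf (blockQuat n j x)) : ℝ)) μ :=
    fun i j => integrable_of_bound hsphere _ (hcont_inner i j) 16 (hb_inner i j)
  -- fourth moments
  set k0 : Fin (4 * n) := ⟨0, hNpos⟩ with hk0
  set m := ∫ x, (x k0)^4 ∂μ with hm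
  have fourth_all : ∀ k l : Fin (4 * n), k ≠ l →
      (∫ x, (x k)^4 ∂μ = ∫ x, (x l)^4 ∂μ)
        ∧ (∫ x, (x k)^4 ∂μ = 3 * ∫ x, (x k)^2 * (x l)^2 ∂μ) := by
    intro k l hkl
    have A := rot_eq hsphere hinv k l hkl
    have B := rot_eq hsphere hinv l k hkl.symm
    have C : ∫ x, (x l)^2 * (x k)^2 ∂μ = ∫ x, (x k)^2 * (x l)^2 ∂μ :=
      integral_congr_ae (Filter.Eventually.of_forall fun x => by ring)
    rw [C] at B
    constructor <;> linarith
  have m_all : ∀ k : Fin (4 * n), ∫ x, (x k)^4 ∂μ = m := by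
    intro k
    by_cases h : k = k0
    · rw [h]
    · exact (fourth_all k k0 h).1
  have pair : ∀ k l : Fin (4 * n),
      ∫ x, (x k)^2 * (x l)^2 ∂μ = if k = l then m else m / 3 := by
    intro k l
    by_cases h : k = l
    · subst h
      rw [if_pos rfl, ← m_all k]
      exact integral_congr_ae (Filter.Eventually.of_forall fun x => by ring)
    · rw [if_neg h]
      have h1 := (fourth_all k l h).2
      have h2 := m_all k
      linarith
  -- global identity
  have hone : ∫ x, (∑ k : Fin (4 * n), (x k)^2)^2 ∂μ = 1 := by
    have : ∀ᵐ x ∂μ, (∑ k : Fin (4 * n), (x k)^2)^2 = (1:ℝ) :=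
      (ae_norm_one hsphere).mono fun x hx => by rw [sum_sq_of_norm_one x hx]; norm_num
    rw [integral_congr_ae this]
    simp
  have hexp : ∫ x, (∑ k : Fin (4 * n), (x k)^2)^2 ∂μ
      = ∑ k : Fin (4 * n), ∑ l : Fin (4 * n), ∫ x, (x k)^2 * (x l)^2 ∂μ := by
    have hpt : ∀ x : EuclideanSpace ℝ (Fin (4 * n)),
        (∑ k : Fin (4 * n), (x k)^2)^2
          = ∑ k : Fin (4 * n), ∑ l : Fin (4 * n), (x k)^2 * (x l)^2 := by
      intro x; rw [sq, Finset.sum_mul_sum]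
    rw [integral_congr_ae (Filter.Eventually.of_forall hpt)]
    rw [integral_finset_sum _ (fun k _ => integrable_finset_sum _
      (fun l _ => integrable_monomial hsphere k l 2 2))]
    exact Finset.sum_congr rfl fun k _ => integral_finset_sum _
      (fun l _ => integrable_monomial hsphere k l 2 2)
  have hglobal : (4 * n : ℝ) * ((4 * n : ℝ) * (m / 3) + (m - m / 3)) = 1 := by
    have inner_eval : ∀ k : Fin (4 * n),
        ∑ l : Fin (4 * n), ∫ x, (x k)^2 * (x l)^2 ∂μ
          = (4 * n : ℝ) * (m / 3) + (m - m / 3) := by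
      intro k
      have h1 : ∀ l : Fin (4 * n), ∫ x, (x k)^2 * (x l)^2 ∂μ
          = m / 3 + (if k = l then m - m / 3 else 0) := by
        intro l; rw [pair k l]; by_cases h : k = l <;> simp [h]
      rw [Finset.sum_congr rfl fun l _ => h1 l, Finset.sum_add_distrib, Finset.sum_const,
        Finset.sum_ite_eq, Finset.card_univ]
      simp [Fintype.card_fin, nsmul_eq_mul]
    have := hexp
    rw [Finset.sum_congr rfl fun k _ => inner_eval k, Finset.sum_const, Finset.card_univ,
      Fintype.card_fin, nsmul_eq_mul] at this
    rw [hone] at this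
    push_cast at this ⊢
    linarith
  -- cross terms vanish
  have cross : ∀ i j : Fin n, i ≠ j →
      ∫ x, (inner ℝ (Hopf (blockQuat n i x)) (Hopf (blockQuat n j x)) : ℝ) ∂μ = 0 := by
    intro i j hij
    set σ : Equiv.Perm (Fin (4 * n)) :=
      Equiv.swap (blockIdx n i 0) (blockIdx n i 2) * Equiv.swap (blockIdx n i 1) (blockIdx n i 3)
      with hσ
    set ε : Fin (4 * n) → ℝ :=
      fun mm => if mm = blockIdx n i 0 ∨ mm = blockIdx n i 3 then -1 else 1 with hεd
    have hok : ∀ mm, ε mm = 1 ∨ ε mm = -1 := fun mm => by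
      by_cases h : mm = blockIdx n i 0 ∨ mm = blockIdx n i 3 <;> simp [hεd, h]
    set O := signedPerm σ ε hok with hOd
    have hσ0 : σ (blockIdx n i 0) = blockIdx n i 2 := by
      rw [hσ]
      show Equiv.swap (blockIdx n i 0) (blockIdx n i 2)
        ((Equiv.swap (blockIdx n i 1) (blockIdx n i 3)) (blockIdx n i 0)) = _
      rw [Equiv.swap_apply_of_ne_of_ne (blockIdx_ne (Or.inr (by decide)))
        (blockIdx_ne (Or.inr (by decide))), Equiv.swap_apply_left]
    have hσ1 : σ (blockIdx n i 1) = blockIdx n i 3 := by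
      rw [hσ]
      show Equiv.swap (blockIdx n i 0) (blockIdx n i 2)
        ((Equiv.swap (blockIdx n i 1) (blockIdx n i 3)) (blockIdx n i 1)) = _
      rw [Equiv.swap_apply_left,
        Equiv.swap_apply_of_ne_of_ne (blockIdx_ne (Or.inr (by decide)))
          (blockIdx_ne (Or.inr (by decide)))]
    have hσ2 : σ (blockIdx n i 2) = blockIdx n i 0 := by
      rw [hσ]
      show Equiv.swap (blockIdx n i 0) (blockIdx n i 2)
        ((Equiv.swap (blockIdx n i 1) (blockIdx n i 3)) (blockIdx n i 2)) = _
      rw [Equiv.swap_apply_of_ne_of_ne (blockIdx_ne (Or.inr (by decide)))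
        (blockIdx_ne (Or.inr (by decide))), Equiv.swap_apply_right]
    have hσ3 : σ (blockIdx n i 3) = blockIdx n i 1 := by
      rw [hσ]
      show Equiv.swap (blockIdx n i 0) (blockIdx n i 2)
        ((Equiv.swap (blockIdx n i 1) (blockIdx n i 3)) (blockIdx n i 3)) = _
      rw [Equiv.swap_apply_right,
        Equiv.swap_apply_of_ne_of_ne (blockIdx_ne (Or.inr (by decide)))
          (blockIdx_ne (Or.inr (by decide)))]
    have hOx : ∀ x : EuclideanSpace ℝ (Fin (4 * n)),
        blockQuat n i (O x) = jQ * blockQuat n i x := by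
      intro x
      rw [blockQuat_eq, blockQuat_eq, jQ_mul_mk]
      have h0 : O x (blockIdx n i 0) = -x (blockIdx n i 2) := by
        rw [hOd, signedPerm_apply, hσ0]
        have : ε (blockIdx n i 0) = -1 := by rw [hεd]; simp
        rw [this]; ring
      have h1 : O x (blockIdx n i 1) = x (blockIdx n i 3) := by
        rw [hOd, signedPerm_apply, hσ1]
        have : ε (blockIdx n i 1) = 1 := by
          simp only [hεd]
          rw [if_neg]
          push_neg
          exact ⟨blockIdx_ne (Or.inr (by decide)), blockIdx_ne (Or.inr (by decide))⟩
        rw [this]; ring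
      have h2 : O x (blockIdx n i 2) = x (blockIdx n i 0) := by
        rw [hOd, signedPerm_apply, hσ2]
        have : ε (blockIdx n i 2) = 1 := by
          simp only [hεd]
          rw [if_neg]
          push_neg
          exact ⟨blockIdx_ne (Or.inr (by decide)), blockIdx_ne (Or.inr (by decide))⟩
        rw [this]; ring
      have h3 : O x (blockIdx n i 3) = -x (blockIdx n i 1) := by
        rw [hOd, signedPerm_apply, hσ3]
        have : ε (blockIdx n i 3) = -1 := by rw [hεd]; simp
        rw [this]; ring
      rw [h0, h1, h2, h3]
    have hOxj : ∀ x : EuclideanSpace ℝ (Fin (4 * n)),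
        blockQuat n j (O x) = blockQuat n j x := by
      intro x
      rw [blockQuat_eq, blockQuat_eq]
      have hfix : ∀ t : Fin 4, O x (blockIdx n j t) = x (blockIdx n j t) := by
        intro t
        rw [hOd, signedPerm_apply]
        have hσfix : σ (blockIdx n j t) = blockIdx n j t := by
          rw [hσ]
          show Equiv.swap (blockIdx n i 0) (blockIdx n i 2)
            ((Equiv.swap (blockIdx n i 1) (blockIdx n i 3)) (blockIdx n j t)) = _
          rw [Equiv.swap_apply_of_ne_of_ne (blockIdx_ne (Or.inl hij.symm))
              (blockIdx_ne (Or.inl hij.symm)),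
            Equiv.swap_apply_of_ne_of_ne (blockIdx_ne (Or.inl hij.symm))
              (blockIdx_ne (Or.inl hij.symm))]
        rw [hσfix]
        have hεone : ε (blockIdx n j t) = 1 := by
          simp only [hεd]
          rw [if_neg]
          push_neg
          exact ⟨blockIdx_ne (Or.inl hij.symm), blockIdx_ne (Or.inl hij.symm)⟩
        rw [hεone, one_mul]
      rw [hfix 0, hfix 1, hfix 2, hfix 3]
    have h := integral_comp_iso hinv O
      (fun y => (inner ℝ (Hopf (blockQuat n i y)) (Hopf (blockQuat n j y)) : ℝ))
      (hcont_inner i j)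
    have hneg : ∀ x : EuclideanSpace ℝ (Fin (4 * n)),
        (fun y => (inner ℝ (Hopf (blockQuat n i y)) (Hopf (blockQuat n j y)) : ℝ)) (O x)
          = -(inner ℝ (Hopf (blockQuat n i x)) (Hopf (blockQuat n j x)) : ℝ) := by
      intro x
      show (inner ℝ (Hopf (blockQuat n i (O x))) (Hopf (blockQuat n j (O x))) : ℝ) = _
      rw [hOx x, hOxj x, Hopf_jQ_mul, inner_neg_left]
    rw [integral_congr_ae (Filter.Eventually.of_forall hneg), integral_neg] at h
    linarith
  -- diagonal terms
  have diag : ∀ i : Fin n,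
      ∫ x, (inner ℝ (Hopf (blockQuat n i x)) (Hopf (blockQuat n i x)) : ℝ) ∂μ = 8 * m := by
    intro i
    have hpt : ∀ x : EuclideanSpace ℝ (Fin (4 * n)),
        (inner ℝ (Hopf (blockQuat n i x)) (Hopf (blockQuat n i x)) : ℝ)
          = ∑ s : Fin 4, ∑ t : Fin 4, (x (blockIdx n i s))^2 * (x (blockIdx n i t))^2 := by
      intro x
      rw [inner_Hopf_self, normSq_blockQuat]
      have h4 : (x (blockIdx n i 0))^2 + (x (blockIdx n i 1))^2
          + (x (blockIdx n i 2))^2 + (x (blockIdx n i 3))^2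
          = ∑ t : Fin 4, (x (blockIdx n i t))^2 := by
        rw [Fin.sum_univ_four]
      rw [h4, sq, Finset.sum_mul_sum]
    rw [integral_congr_ae (Filter.Eventually.of_forall hpt)]
    rw [integral_finset_sum (μ := μ) Finset.univ
      (f := fun (s : Fin 4) (x : EuclideanSpace ℝ (Fin (4 * n))) =>
        ∑ t : Fin 4, (x (blockIdx n i s))^2 * (x (blockIdx n i t))^2)
      (fun s _ => integrable_finset_sum _
        (fun t _ => integrable_monomial hsphere (blockIdx n i s) (blockIdx n i t) 2 2))]
    rw [Finset.sum_congr rfl (fun s _ => integral_finset_sum (μ := μ) Finset.univ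
      (f := fun (t : Fin 4) (x : EuclideanSpace ℝ (Fin (4 * n))) =>
        (x (blockIdx n i s))^2 * (x (blockIdx n i t))^2)
      (fun t _ => integrable_monomial hsphere (blockIdx n i s) (blockIdx n i t) 2 2))]
    have hterm : ∀ s t : Fin 4,
        ∫ x, (x (blockIdx n i s))^2 * (x (blockIdx n i t))^2 ∂μ
          = m / 3 + (if s = t then m - m / 3 else 0) := by
      intro s t
      rw [pair]
      by_cases h : s = t
      · subst h; simp
      · rw [if_neg h, if_neg (blockIdx_ne (Or.inr h))]
        simp [h]
    rw [Finset.sum_congr rfl fun s _ => Finset.sum_congr rfl fun t _ => hterm s t]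
    have hrow : ∀ s : Fin 4,
        ∑ t : Fin 4, (m / 3 + (if s = t then m - m / 3 else 0)) = 2 * m := by
      intro s
      rw [Finset.sum_add_distrib, Finset.sum_const, Finset.sum_ite_eq, Finset.card_univ]
      simp [Fintype.card_fin, nsmul_eq_mul]
      ring
    rw [Finset.sum_congr rfl fun s _ => hrow s, Finset.sum_const, Finset.card_univ]
    simp [Fintype.card_fin, nsmul_eq_mul]
    ring
  -- main expansion
  have key1 : ∀ x : EuclideanSpace ℝ (Fin (4 * n)),
      ‖∑ i : Fin n, (2 : ℝ) • Hopf (blockQuat n i x)‖^2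
        = ∑ i : Fin n, ∑ j : Fin n,
            (4:ℝ) * (inner ℝ (Hopf (blockQuat n i x)) (Hopf (blockQuat n j x)) : ℝ) := by
    intro x
    rw [← real_inner_self_eq_norm_sq, sum_inner]
    refine Finset.sum_congr rfl fun i _ => ?_
    rw [inner_sum]
    refine Finset.sum_congr rfl fun j _ => ?_
    rw [real_inner_smul_left, real_inner_smul_right]
    ring
  rw [integral_congr_ae (Filter.Eventually.of_forall key1)]
  rw [integral_finset_sum _ (fun i _ => integrable_finset_sum _
    (fun j _ => (hInt i j).const_mul 4))]
  rw [Finset.sum_congr rfl fun i _ => integral_finset_sum _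
    (fun j _ => (hInt i j).const_mul 4)]
  rw [Finset.sum_congr rfl fun i _ => Finset.sum_congr rfl fun j _ =>
    integral_const_mul (4:ℝ) _]
  have hterm2 : ∀ i j : Fin n,
      (4:ℝ) * ∫ x, (inner ℝ (Hopf (blockQuat n i x)) (Hopf (blockQuat n j x)) : ℝ) ∂μ
        = if i = j then 32 * m else 0 := by
    intro i j
    by_cases h : i = j
    · subst h; rw [diag i, if_pos rfl]; ring
    · rw [cross i j h, if_neg h]; ring
  rw [Finset.sum_congr rfl fun i _ => Finset.sum_congr rfl fun j _ => hterm2 i j]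
  have hrow2 : ∀ i : Fin n, ∑ j : Fin n, (if i = j then 32 * m else 0) = 32 * m := by
    intro i
    rw [Finset.sum_ite_eq]
    simp
  rw [Finset.sum_congr rfl fun i _ => hrow2 i, Finset.sum_const, Finset.card_univ,
    Fintype.card_fin, nsmul_eq_mul]
  -- final arithmetic
  have hden : (2 * (n : ℝ) + 1) ≠ 0 := by
    have : (1:ℝ) ≤ (n:ℝ) := by exact_mod_cast hn
    nlinarith
  rw [eq_div_iff hden]
  push_cast at hglobal ⊢
  linear_combination (12:ℝ) * hglobal
end

section
/- Let n ≥ 2, let d ≥ 1, let 1 ≤ k ≤ n, and let e : Fin n → EuclideanSpace ℝ (Fin d) be a closed equilateral polygon of length 2, i.e. ∑ j, e j = 0 and ‖e j‖ = 2/n for every j. Then the average over all n! permutations σ of Fin n of the squared length of the chord skipping the first k edges satisfies (1/n!) · ∑_{σ ∈ Perm(Fin n)} ‖∑_{j=0}^{k-1} e (σ j)‖² = ((n−k)/(n−1)) · (4k/n²). -/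
open Finset

/-- Permutation-sum of a two-point function depends only on distinctness of the pair. -/
lemma perm_sum_pair_eq {n : ℕ} {M : Type*} [AddCommMonoid M]
    (F : Fin n → Fin n → M) {a b a' b' : Fin n} (hab : a ≠ b) (hab' : a' ≠ b') :
    ∑ σ : Equiv.Perm (Fin n), F (σ a) (σ b) = ∑ σ : Equiv.Perm (Fin n), F (σ a') (σ b') := by
  obtain ⟨π, ha, hb⟩ : ∃ π : Equiv.Perm (Fin n), π a' = a ∧ π b' = b := by
    set c := Equiv.swap a a' b' with hc
    have hca : c ≠ a := by
      rcases eq_or_ne b' a with h | h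
      · have : a ≠ a' := by rintro rfl; exact hab' h.symm
        simp [hc, h, Equiv.swap_apply_left, this.symm]
      · have hba' : b' ≠ a' := hab'.symm
        rw [hc, Equiv.swap_apply_of_ne_of_ne h hba']
        exact h
    refine ⟨(Equiv.swap c b) * Equiv.swap a a', ?_, ?_⟩
    · simp only [Equiv.Perm.mul_apply, Equiv.swap_apply_right]
      exact Equiv.swap_apply_of_ne_of_ne hca.symm hab
    · simp only [Equiv.Perm.mul_apply, ← hc, Equiv.swap_apply_left]
  calc ∑ σ : Equiv.Perm (Fin n), F (σ a) (σ b)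
      = ∑ σ : Equiv.Perm (Fin n), F ((σ * π) a') ((σ * π) b') := by
        simp [Equiv.Perm.mul_apply, ha, hb]
    _ = _ := Fintype.sum_equiv (Equiv.mulRight π⁻¹).symm _ _ (by intro σ; simp)

/-- For a closed equilateral polygon of length 2 (edges of length `2/n` summing to zero), the
average over all rearrangements of the squared length of the chord skipping the first `k`
edges is `((n−k)/(n−1))·(4k/n²)`. -/
theorem sChord_closed_equilateral (n d k : ℕ) (hn : 2 ≤ n) (hd : 1 ≤ d) (hk1 : 1 ≤ k)
    (hkn : k ≤ n) (e : Fin n → EuclideanSpace ℝ (Fin d))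
    (hclosed : ∑ j, e j = 0) (hequi : ∀ j, ‖e j‖ = 2 / n) :
    (1 / (n.factorial : ℝ)) *
        ∑ σ : Equiv.Perm (Fin n), ‖∑ j : Fin k, e (σ (Fin.castLE hkn j))‖ ^ 2
      = (((n : ℝ) - k) / ((n : ℝ) - 1)) * (4 * (k : ℝ) / (n : ℝ) ^ 2) := by
  have hnpos : 0 < n := by omega
  have hn0 : (n : ℝ) ≠ 0 := by positivity
  have hn1 : (n : ℝ) - 1 ≠ 0 := by
    have : (2 : ℝ) ≤ n := by exact_mod_cast hn
    linarith
  have hfac : (n.factorial : ℝ) ≠ 0 := by positivity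
  set i0 : Fin n := ⟨0, by omega⟩ with hi0
  set i1 : Fin n := ⟨1, by omega⟩ with hi1
  have hi01 : i0 ≠ i1 := by simp [hi0, hi1, Fin.ext_iff]
  set D : ℝ := (n.factorial : ℝ) * (2 / n) ^ 2 with hDdef
  set C : ℝ := ∑ σ : Equiv.Perm (Fin n), (inner ℝ (e (σ i0)) (e (σ i1)) : ℝ) with hCdef
  have hD : ∀ a : Fin n,
      ∑ σ : Equiv.Perm (Fin n), (inner ℝ (e (σ a)) (e (σ a)) : ℝ) = D := by
    intro a
    have h1 : ∀ σ : Equiv.Perm (Fin n), (inner ℝ (e (σ a)) (e (σ a)) : ℝ) = (2 / n) ^ 2 := by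
      intro σ; rw [real_inner_self_eq_norm_sq, hequi]
    rw [Finset.sum_congr rfl fun σ _ => h1 σ]
    simp [hDdef, Fintype.card_perm, mul_comm]
  have hoff : ∀ a b : Fin n, a ≠ b →
      ∑ σ : Equiv.Perm (Fin n), (inner ℝ (e (σ a)) (e (σ b)) : ℝ) = C :=
    fun a b h => perm_sum_pair_eq (fun x y => (inner ℝ (e x) (e y) : ℝ)) h hi01
  -- compute C
  have hCval : ((n : ℝ) - 1) * C = -D := by
    have hswap : ∑ b ∈ univ.erase i0, ∑ σ : Equiv.Perm (Fin n),
        (inner ℝ (e (σ i0)) (e (σ b)) : ℝ)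
        = ∑ σ : Equiv.Perm (Fin n), ∑ b ∈ univ.erase i0,
          (inner ℝ (e (σ i0)) (e (σ b)) : ℝ) := Finset.sum_comm
    have hleft : ∑ b ∈ univ.erase i0, ∑ σ : Equiv.Perm (Fin n),
        (inner ℝ (e (σ i0)) (e (σ b)) : ℝ) = ((n : ℝ) - 1) * C := by
      rw [Finset.sum_congr rfl fun b hb => hoff i0 b (Finset.ne_of_mem_erase hb).symm]
      rw [Finset.sum_const, Finset.card_erase_of_mem (Finset.mem_univ _), Finset.card_univ,
        Fintype.card_fin, nsmul_eq_mul]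
      congr 1
      have : (1:ℕ) ≤ n := by omega
      push_cast [Nat.cast_sub this]
      ring
    have hright : ∀ σ : Equiv.Perm (Fin n), ∑ b ∈ univ.erase i0,
        (inner ℝ (e (σ i0)) (e (σ b)) : ℝ) = -((2 / n : ℝ) ^ 2) := by
      intro σ
      have hsum : ∑ b ∈ univ.erase i0, e (σ b) = -(e (σ i0)) := by
        have h1 : ∑ b : Fin n, e (σ b) = 0 := by
          rw [Equiv.sum_comp σ e]; exact hclosed
        have h2 := Finset.add_sum_erase univ (fun b => e (σ b)) (Finset.mem_univ i0)
        rw [h1] at h2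
        simpa using eq_neg_of_add_eq_zero_right h2
      rw [← inner_sum, hsum, inner_neg_right, real_inner_self_eq_norm_sq, hequi]
    rw [hleft] at hswap
    rw [hswap, Finset.sum_congr rfl fun σ _ => hright σ]
    simp [hDdef, Fintype.card_perm, mul_comm]
  -- expand the main sum
  have hexpand : ∀ σ : Equiv.Perm (Fin n),
      (‖∑ j : Fin k, e (σ (Fin.castLE hkn j))‖ : ℝ) ^ 2
      = ∑ i : Fin k, ∑ j : Fin k,
          (inner ℝ (e (σ (Fin.castLE hkn i))) (e (σ (Fin.castLE hkn j))) : ℝ) := by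
    intro σ
    rw [← real_inner_self_eq_norm_sq, sum_inner]
    exact Finset.sum_congr rfl fun i _ => inner_sum _ _ _
  have hkey : ∀ i j : Fin k,
      ∑ σ : Equiv.Perm (Fin n),
        (inner ℝ (e (σ (Fin.castLE hkn i))) (e (σ (Fin.castLE hkn j))) : ℝ)
      = if i = j then D else C := by
    intro i j
    split_ifs with h
    · subst h; exact hD _
    · exact hoff _ _ (by simpa [Fin.ext_iff] using fun hh => h (Fin.ext hh))
  have hsum : ∑ σ : Equiv.Perm (Fin n), ‖∑ j : Fin k, e (σ (Fin.castLE hkn j))‖ ^ 2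
      = (k : ℝ) * D + ((k : ℝ) ^ 2 - k) * C := by
    rw [Finset.sum_congr rfl fun σ _ => hexpand σ, Finset.sum_comm]
    rw [Finset.sum_congr rfl fun i _ => Finset.sum_comm]
    have : ∀ i j : Fin k, (∑ σ : Equiv.Perm (Fin n),
        (inner ℝ (e (σ (Fin.castLE hkn i))) (e (σ (Fin.castLE hkn j))) : ℝ))
        = C + (if i = j then D - C else 0) := by
      intro i j; rw [hkey]; split_ifs <;> ring
    rw [Finset.sum_congr rfl fun i _ => Finset.sum_congr rfl fun j _ => this i j]
    simp only [Finset.sum_add_distrib, Finset.sum_const, Finset.card_univ, Fintype.card_fin,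
      nsmul_eq_mul, Finset.sum_ite_eq, Finset.mem_univ, if_true]
    push_cast
    ring
  rw [hsum]
  have hCval' : C = -D / ((n : ℝ) - 1) := by
    field_simp at hCval ⊢
    linarith [hCval]
  rw [hCval', hDdef]
  field_simp
  ring
end

section
/- Let n ≥ 2, let d ≥ 1, and let e : Fin n → EuclideanSpace ℝ (Fin d) be a closed equilateral polygon of length 2, i.e. ∑ j, e j = 0 and ‖e j‖ = 2/n for every j. For a permutation σ of Fin n define the n vertices v_0 = 0 and v_m = ∑_{j=0}^{m-1} e(σ j) for 1 ≤ m ≤ n−1, and define Gyradius(σ) = (1/(2n²)) · ∑_{i=0}^{n-1} ∑_{j=0}^{n-1} ‖v_i − v_j‖². Then the average over all n! permutations satisfies (1/n!) · ∑_{σ ∈ Perm(Fin n)} Gyradius(σ) = (n+1)/(3n²). -/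
open Finset


lemma sumR (n : ℕ) : ∑ t ∈ range n, (t:ℝ) = n*(n-1)/2 := by
  induction n with
  | zero => simp
  | succ k ih => rw [Finset.sum_range_succ, ih]; push_cast; ring

lemma sumSq (n : ℕ) : ∑ t ∈ range n, (t:ℝ)^2 = n*(n-1)*(2*n-1)/6 := by
  induction n with
  | zero => simp
  | succ k ih => rw [Finset.sum_range_succ, ih]; push_cast; ring

lemma sumMin (n : ℕ) : ∑ t ∈ range n, ∑ u ∈ range n, ((min t u : ℕ):ℝ) = n*(n-1)*(2*n-1)/6 := by
  induction n with
  | zero => simp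
  | succ k ih =>
    rw [Finset.sum_range_succ]
    have h1 : ∀ t ∈ range k, ∑ u ∈ range (k+1), ((min t u : ℕ):ℝ)
        = (∑ u ∈ range k, ((min t u : ℕ):ℝ)) + t := by
      intro t ht
      rw [Finset.sum_range_succ]
      congr 1
      rw [min_eq_left (le_of_lt (mem_range.mp ht))]
    rw [Finset.sum_congr rfl h1, Finset.sum_add_distrib, ih, Finset.sum_range_succ, sumR]
    have h2 : ∀ u ∈ range k, ((min k u : ℕ):ℝ) = u := by
      intro u hu; rw [min_eq_right (le_of_lt (mem_range.mp hu))]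
    rw [Finset.sum_congr rfl h2, sumR, min_self]
    push_cast; ring

lemma rangeSqDiff (n : ℕ) : ∑ t ∈ range n, ∑ u ∈ range n, ((t:ℝ)-(u:ℝ))^2
    = 2*(n:ℝ)*((n:ℝ)*((n:ℝ)-1)*(2*(n:ℝ)-1)/6) - 2*((n:ℝ)*((n:ℝ)-1)/2)^2 := by
  have h1 := sumR n; have h2 := sumSq n
  have step : ∀ t ∈ range n, ∑ u ∈ range n, ((t:ℝ)-(u:ℝ))^2
      = (n:ℝ)*(t:ℝ)^2 - (2*(t:ℝ))*((n:ℝ)*((n:ℝ)-1)/2) + (n:ℝ)*((n:ℝ)-1)*(2*(n:ℝ)-1)/6 := by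
    intro t _
    have e1 : ∀ u : ℕ, ((t:ℝ)-(u:ℝ))^2 = (t:ℝ)^2 - (2*(t:ℝ))*(u:ℝ) + (u:ℝ)^2 := fun u => by ring
    simp_rw [e1]
    rw [Finset.sum_add_distrib, Finset.sum_sub_distrib, Finset.sum_const, card_range,
      ← Finset.mul_sum, h1, h2, nsmul_eq_mul]
  rw [Finset.sum_congr rfl step, Finset.sum_add_distrib, Finset.sum_sub_distrib,
    Finset.sum_const, card_range, nsmul_eq_mul, ← Finset.mul_sum, h2]
  have e2 : ∑ t ∈ range n, (2*(t:ℝ))*((n:ℝ)*((n:ℝ)-1)/2)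
      = (2*((n:ℝ)*((n:ℝ)-1)/2))*((n:ℝ)*((n:ℝ)-1)/2) := by
    rw [← Finset.sum_mul, ← Finset.mul_sum, h1]
  rw [e2]; ring

lemma rangeLin (n : ℕ) : ∑ t ∈ range n, ∑ u ∈ range n, ((t:ℝ)+(u:ℝ)-2*((min t u : ℕ):ℝ))
    = 2*(n:ℝ)*((n:ℝ)*((n:ℝ)-1)/2) - 2*((n:ℝ)*((n:ℝ)-1)*(2*(n:ℝ)-1)/6) := by
  have h1 := sumR n; have h3 := sumMin n
  have step : ∀ t ∈ range n, ∑ u ∈ range n, ((t:ℝ)+(u:ℝ)-2*((min t u : ℕ):ℝ))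
      = (n:ℝ)*(t:ℝ) + (n:ℝ)*((n:ℝ)-1)/2 - 2*(∑ u ∈ range n, ((min t u : ℕ):ℝ)) := by
    intro t _
    rw [Finset.sum_sub_distrib, Finset.sum_add_distrib, Finset.sum_const, card_range,
      ← Finset.mul_sum, h1, nsmul_eq_mul]
  rw [Finset.sum_congr rfl step, Finset.sum_sub_distrib, Finset.sum_add_distrib,
    Finset.sum_const, card_range, ← Finset.mul_sum, ← Finset.mul_sum, h1, h3, nsmul_eq_mul]
  ring

lemma permPairEq {n : ℕ} (g : Fin n → Fin n → ℝ) (m m' k k' : Fin n)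
    (hmm : m ≠ m') (hkk : k ≠ k') :
    ∑ σ : Equiv.Perm (Fin n), g (σ m) (σ m') = ∑ σ : Equiv.Perm (Fin n), g (σ k) (σ k') := by
  set τ₁ := Equiv.swap m k with hτ₁
  set m₁ := τ₁ m' with hm₁
  have hm₁m : m₁ ≠ k := by
    intro h
    apply hmm
    have h0 : τ₁ m = k := Equiv.swap_apply_left m k
    exact (τ₁.injective (by rw [h0, ← h])).symm
  set τ₂ := Equiv.swap m₁ k' with hτ₂
  set τ := τ₁.trans τ₂ with hτ
  have hk : τ m = k := by
    simp only [hτ, Equiv.trans_apply]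
    rw [show τ₁ m = k from Equiv.swap_apply_left m k]
    exact Equiv.swap_apply_of_ne_of_ne hm₁m.symm hkk
  have hk' : τ m' = k' := by
    simp only [hτ, Equiv.trans_apply, ← hm₁]
    exact Equiv.swap_apply_left m₁ k'
  have h := Equiv.sum_comp (Equiv.mulRight (τ : Equiv.Perm (Fin n)))
    (fun σ : Equiv.Perm (Fin n) => g (σ m) (σ m'))
  rw [← h]
  apply Finset.sum_congr rfl
  intro σ _
  show g ((σ * τ) m) ((σ * τ) m') = g (σ k) (σ k')
  rw [Equiv.Perm.mul_apply, Equiv.Perm.mul_apply, hk, hk']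

lemma sumIndic (n k : ℕ) (hk : k ≤ n) : ∑ m : Fin n, (if (m:ℕ) < k then (1:ℝ) else 0) = k := by
  rw [Fin.sum_univ_eq_sum_range (fun t => if t < k then (1:ℝ) else 0) n]
  rw [Finset.sum_ite, Finset.sum_const, Finset.sum_const]
  have : (range n).filter (fun t => t < k) = range k := by
    ext t; simp [mem_filter]; omega
  simp [this]



/-- For a closed equilateral polygon of length 2 (edges of length `2/n` summing to zero), the
average over all rearrangements of the radius of gyration (with `n` vertices given by the
partial sums starting at the origin) is `(n+1)/(3n²)`. -/
theorem sGyradius_closed_equilateral (n d : ℕ) (hn : 2 ≤ n) (hd : 1 ≤ d)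
    (e : Fin n → EuclideanSpace ℝ (Fin d))
    (hclosed : ∑ j, e j = 0) (hequi : ∀ j, ‖e j‖ = 2 / n) :
    (1 / (n.factorial : ℝ)) *
        ∑ σ : Equiv.Perm (Fin n),
          (1 / (2 * (n : ℝ) ^ 2)) *
            ∑ i : Fin n, ∑ j : Fin n,
              ‖(∑ m : Fin n, if (m : ℕ) < (i : ℕ) then e (σ m) else 0)
                - (∑ m : Fin n, if (m : ℕ) < (j : ℕ) then e (σ m) else 0)‖ ^ 2
      = ((n : ℝ) + 1) / (3 * (n : ℝ) ^ 2) := by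
  classical
  have hn0 : (n:ℝ) ≠ 0 := by
    have : n ≠ 0 := by omega
    exact_mod_cast this
  have hn2 : (2:ℝ) ≤ (n:ℝ) := by exact_mod_cast hn
  have hn1 : (n:ℝ) - 1 ≠ 0 := by linarith
  have hfac : (n.factorial : ℝ) ≠ 0 := Nat.cast_ne_zero.mpr n.factorial_ne_zero
  set g : Fin n → Fin n → ℝ := fun a b => inner ℝ (e a) (e b) with hg
  set A : Fin n → Fin n → ℝ := fun m m' => ∑ σ : Equiv.Perm (Fin n), g (σ m) (σ m') with hA
  set QQ : ℝ := (n.factorial : ℝ) * (4 / (n:ℝ)^2) with hQQ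
  have hz : (0:ℕ) < n := by omega
  have ho : (1:ℕ) < n := by omega
  set z : Fin n := ⟨0, hz⟩ with hzdef
  set o : Fin n := ⟨1, ho⟩ with hodef
  have hzo : z ≠ o := by simp [hzdef, hodef, Fin.ext_iff]
  set P : ℝ := A z o with hPdef
  have hAdiag : ∀ m, A m m = QQ := by
    intro m
    have hpt : ∀ σ : Equiv.Perm (Fin n), g (σ m) (σ m) = 4/(n:ℝ)^2 := by
      intro σ
      simp only [hg]
      rw [real_inner_self_eq_norm_sq, hequi]
      rw [div_pow]
      norm_num
    simp only [hA]
    rw [Finset.sum_congr rfl (fun σ _ => hpt σ), Finset.sum_const, Finset.card_univ,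
      Fintype.card_perm, Fintype.card_fin, nsmul_eq_mul, hQQ]
  have hAoff : ∀ m m', m ≠ m' → A m m' = P := by
    intro m m' h
    exact permPairEq g m m' z o h hzo
  have hAform : ∀ m m', A m m' = if m = m' then QQ else P := by
    intro m m'
    by_cases h : m = m'
    · subst h; simp [hAdiag m]
    · simp [h, hAoff m m' h]
  -- total sum is zero
  have inner_step : ∀ σ : Equiv.Perm (Fin n),
      ∑ m : Fin n, ∑ m' : Fin n, g (σ m) (σ m') = 0 := by
    intro σ
    have hsum : ∑ m : Fin n, e (σ m) = 0 := by
      rw [Equiv.sum_comp σ e]; exact hclosed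
    have h2 : ∑ m : Fin n, ∑ m' : Fin n, g (σ m) (σ m')
        = inner ℝ (∑ m : Fin n, e (σ m)) (∑ m' : Fin n, e (σ m')) := by
      rw [sum_inner]
      exact Finset.sum_congr rfl fun m _ => by rw [inner_sum]
    rw [h2, hsum, inner_zero_left]
  have htot : ∑ m : Fin n, ∑ m' : Fin n, A m m' = 0 := by
    have e1 : ∑ m : Fin n, ∑ m' : Fin n, A m m'
        = ∑ σ : Equiv.Perm (Fin n), ∑ m : Fin n, ∑ m' : Fin n, g (σ m) (σ m') := by
      simp only [hA]
      rw [show (∑ m : Fin n, ∑ m' : Fin n, ∑ σ : Equiv.Perm (Fin n), g (σ m) (σ m'))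
          = ∑ m : Fin n, ∑ σ : Equiv.Perm (Fin n), ∑ m' : Fin n, g (σ m) (σ m') from
        Finset.sum_congr rfl fun m _ => Finset.sum_comm, Finset.sum_comm]
    rw [e1, Finset.sum_eq_zero fun σ _ => inner_step σ]
  -- value of P
  have hP : P = -QQ / ((n:ℝ) - 1) := by
    have e2 : ∀ m : Fin n, ∑ m' : Fin n, A m m' = (n:ℝ) * P + (QQ - P) := by
      intro m
      have : ∀ m' : Fin n, A m m' = P + (if m = m' then QQ - P else 0) := by
        intro m'
        rw [hAform m m']
        by_cases h : m = m' <;> simp [h]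
      rw [Finset.sum_congr rfl fun m' _ => this m', Finset.sum_add_distrib,
        Finset.sum_const, Finset.card_univ, Fintype.card_fin, nsmul_eq_mul,
        Finset.sum_ite_eq]
      simp
    rw [Finset.sum_congr rfl fun m _ => e2 m, Finset.sum_const, Finset.card_univ,
      Fintype.card_fin, nsmul_eq_mul] at htot
    have hne : ((n:ℝ) * P + (QQ - P)) = 0 := by
      rcases mul_eq_zero.mp htot with h | h
      · exact absurd h hn0
      · exact h
    field_simp
    linarith
  -- indicator coefficients
  set c : Fin n → Fin n → ℝ := fun i m => if (m:ℕ) < (i:ℕ) then 1 else 0 with hc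
  have hdiff : ∀ (i j : Fin n) (σ : Equiv.Perm (Fin n)),
      ((∑ m : Fin n, if (m:ℕ) < (i:ℕ) then e (σ m) else 0)
        - (∑ m : Fin n, if (m:ℕ) < (j:ℕ) then e (σ m) else 0))
      = ∑ m : Fin n, (c i m - c j m) • e (σ m) := by
    intro i j σ
    rw [← Finset.sum_sub_distrib]
    refine Finset.sum_congr rfl fun m _ => ?_
    simp only [hc]
    split_ifs <;> simp [neg_smul, sub_smul, one_smul, zero_smul]
  have hnorm : ∀ (w : Fin n → EuclideanSpace ℝ (Fin d)) (cc : Fin n → ℝ),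
      ‖∑ m : Fin n, cc m • w m‖^2
        = ∑ m : Fin n, ∑ m' : Fin n, cc m * cc m' * (inner ℝ (w m) (w m') : ℝ) := by
    intro w cc
    rw [← real_inner_self_eq_norm_sq, sum_inner]
    refine Finset.sum_congr rfl fun m _ => ?_
    rw [inner_sum]
    refine Finset.sum_congr rfl fun m' _ => ?_
    rw [real_inner_smul_left, real_inner_smul_right]
    ring
  have hcsum : ∀ i : Fin n, ∑ m : Fin n, c i m = ((i:ℕ):ℝ) := by
    intro i; exact sumIndic n i (le_of_lt i.isLt)
  have hcsq : ∀ i j : Fin n, ∑ m : Fin n, (c i m - c j m)^2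
      = ((i:ℕ):ℝ) + ((j:ℕ):ℝ) - 2 * ((min (i:ℕ) (j:ℕ) : ℕ):ℝ) := by
    intro i j
    have hpt : ∀ m : Fin n, (c i m - c j m)^2
        = c i m + c j m - 2 * (if (m:ℕ) < min (i:ℕ) (j:ℕ) then (1:ℝ) else 0) := by
      intro m
      simp only [hc, lt_min_iff]
      split_ifs <;> try ring
      all_goals tauto
    rw [Finset.sum_congr rfl fun m _ => hpt m, Finset.sum_sub_distrib,
      Finset.sum_add_distrib, ← Finset.mul_sum, hcsum i, hcsum j,
      sumIndic n (min (i:ℕ) (j:ℕ)) (le_trans (min_le_left _ _) (le_of_lt i.isLt))]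
  have swap3 : ∀ (F : Equiv.Perm (Fin n) → Fin n → Fin n → ℝ),
      ∑ σ : Equiv.Perm (Fin n), ∑ m : Fin n, ∑ m' : Fin n, F σ m m'
      = ∑ m : Fin n, ∑ m' : Fin n, ∑ σ : Equiv.Perm (Fin n), F σ m m' := by
    intro F
    rw [Finset.sum_comm]
    exact Finset.sum_congr rfl fun m _ => Finset.sum_comm
  -- the per-(i,j) average
  have hT : ∀ i j : Fin n,
      ∑ σ : Equiv.Perm (Fin n),
        ‖(∑ m : Fin n, if (m:ℕ) < (i:ℕ) then e (σ m) else 0)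
          - (∑ m : Fin n, if (m:ℕ) < (j:ℕ) then e (σ m) else 0)‖^2
      = P * (((i:ℕ):ℝ) - ((j:ℕ):ℝ))^2
        + (QQ - P) * (((i:ℕ):ℝ) + ((j:ℕ):ℝ) - 2*((min (i:ℕ) (j:ℕ):ℕ):ℝ)) := by
    intro i j
    have st1 : ∑ σ : Equiv.Perm (Fin n),
        ‖(∑ m : Fin n, if (m:ℕ) < (i:ℕ) then e (σ m) else 0)
          - (∑ m : Fin n, if (m:ℕ) < (j:ℕ) then e (σ m) else 0)‖^2
        = ∑ σ : Equiv.Perm (Fin n), ∑ m : Fin n, ∑ m' : Fin n,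
            (c i m - c j m) * (c i m' - c j m') * g (σ m) (σ m') := by
      refine Finset.sum_congr rfl fun σ _ => ?_
      rw [hdiff i j σ, hnorm]
    rw [st1, swap3]
    have st2 : ∀ m m' : Fin n,
        ∑ σ : Equiv.Perm (Fin n), (c i m - c j m) * (c i m' - c j m') * g (σ m) (σ m')
        = (c i m - c j m) * (c i m' - c j m') * (if m = m' then QQ else P) := by
      intro m m'
      rw [← Finset.mul_sum]
      congr 1
      exact hAform m m'
    rw [Finset.sum_congr rfl fun m _ => Finset.sum_congr rfl fun m' _ => st2 m m']
    have st3 : ∀ m m' : Fin n,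
        (c i m - c j m) * (c i m' - c j m') * (if m = m' then QQ else P)
        = (c i m - c j m) * (c i m' - c j m') * P
          + (if m = m' then (c i m - c j m) * (c i m' - c j m') * (QQ - P) else 0) := by
      intro m m'
      by_cases h : m = m' <;> simp [h] <;> ring
    rw [Finset.sum_congr rfl fun m _ => Finset.sum_congr rfl fun m' _ => st3 m m']
    simp only [Finset.sum_add_distrib]
    have st4 : ∑ m : Fin n, ∑ m' : Fin n, (c i m - c j m) * (c i m' - c j m') * P
        = P * (((i:ℕ):ℝ) - ((j:ℕ):ℝ))^2 := by
      have : ∀ m : Fin n, ∑ m' : Fin n, (c i m - c j m) * (c i m' - c j m') * P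
          = (c i m - c j m) * ((((i:ℕ):ℝ) - ((j:ℕ):ℝ)) * P) := by
        intro m
        have e3 : ∑ m' : Fin n, (c i m' - c j m') = ((i:ℕ):ℝ) - ((j:ℕ):ℝ) := by
          rw [Finset.sum_sub_distrib, hcsum i, hcsum j]
        calc ∑ m' : Fin n, (c i m - c j m) * (c i m' - c j m') * P
            = (c i m - c j m) * ((∑ m' : Fin n, (c i m' - c j m')) * P) := by
              simp only [mul_assoc]
              rw [← Finset.mul_sum, ← Finset.sum_mul]
          _ = (c i m - c j m) * ((((i:ℕ):ℝ) - ((j:ℕ):ℝ)) * P) := by rw [e3]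
      rw [Finset.sum_congr rfl fun m _ => this m, ← Finset.sum_mul, Finset.sum_sub_distrib,
        hcsum i, hcsum j]
      ring
    have st5 : ∑ m : Fin n, ∑ m' : Fin n,
        (if m = m' then (c i m - c j m) * (c i m' - c j m') * (QQ - P) else 0)
        = (QQ - P) * (((i:ℕ):ℝ) + ((j:ℕ):ℝ) - 2*((min (i:ℕ) (j:ℕ):ℕ):ℝ)) := by
      have : ∀ m : Fin n, ∑ m' : Fin n,
          (if m = m' then (c i m - c j m) * (c i m' - c j m') * (QQ - P) else 0)
          = (c i m - c j m)^2 * (QQ - P) := by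
        intro m
        rw [Finset.sum_ite_eq]
        simp [sq]
      rw [Finset.sum_congr rfl fun m _ => this m, ← Finset.sum_mul, hcsq i j]
      ring
    rw [st4, st5]
  -- final assembly
  rw [← Finset.mul_sum, swap3 (fun σ i j =>
      ‖(∑ m : Fin n, if (m:ℕ) < (i:ℕ) then e (σ m) else 0)
        - (∑ m : Fin n, if (m:ℕ) < (j:ℕ) then e (σ m) else 0)‖^2)]
  rw [Finset.sum_congr rfl fun i _ => Finset.sum_congr rfl fun j _ => hT i j]
  simp only [Finset.sum_add_distrib]
  have hS1 : ∑ i : Fin n, ∑ j : Fin n, P * (((i:ℕ):ℝ) - ((j:ℕ):ℝ))^2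
      = P * (2*(n:ℝ)*((n:ℝ)*((n:ℝ)-1)*(2*(n:ℝ)-1)/6) - 2*((n:ℝ)*((n:ℝ)-1)/2)^2) := by
    have e4 : ∑ i : Fin n, ∑ j : Fin n, (((i:ℕ):ℝ) - ((j:ℕ):ℝ))^2
        = ∑ t ∈ range n, ∑ u ∈ range n, ((t:ℝ)-(u:ℝ))^2 := by
      rw [Fin.sum_univ_eq_sum_range (fun t => ∑ j : Fin n, (((t:ℕ):ℝ) - ((j:ℕ):ℝ))^2) n]
      exact Finset.sum_congr rfl fun t _ =>
        Fin.sum_univ_eq_sum_range (fun u => ((t:ℝ) - ((u:ℕ):ℝ))^2) n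
    simp only [← Finset.mul_sum]
    rw [e4, rangeSqDiff]
  have hS2 : ∑ i : Fin n, ∑ j : Fin n,
        (QQ - P) * (((i:ℕ):ℝ) + ((j:ℕ):ℝ) - 2*((min (i:ℕ) (j:ℕ):ℕ):ℝ))
      = (QQ - P) * (2*(n:ℝ)*((n:ℝ)*((n:ℝ)-1)/2) - 2*((n:ℝ)*((n:ℝ)-1)*(2*(n:ℝ)-1)/6)) := by
    have e5 : ∑ i : Fin n, ∑ j : Fin n, (((i:ℕ):ℝ) + ((j:ℕ):ℝ) - 2*((min (i:ℕ) (j:ℕ):ℕ):ℝ))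
        = ∑ t ∈ range n, ∑ u ∈ range n, ((t:ℝ)+(u:ℝ)-2*((min t u : ℕ):ℝ)) := by
      rw [Fin.sum_univ_eq_sum_range
        (fun t => ∑ j : Fin n, ((t:ℝ) + ((j:ℕ):ℝ) - 2*((min t (j:ℕ):ℕ):ℝ))) n]
      exact Finset.sum_congr rfl fun t _ =>
        Fin.sum_univ_eq_sum_range (fun u => ((t:ℝ) + (u:ℝ) - 2*((min t u:ℕ):ℝ))) n
    simp only [← Finset.mul_sum]
    rw [e5, rangeLin]
  rw [hS1, hS2, hP, hQQ]
  field_simp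
  ring
end
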